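/- For every integer N ≥ 3, one has (N−1)! · N^{N²−2N} · (N−1)^{−(N²−N)} < 1; equivalently, Γ(N)^{1/(N−1)} (N−1)^{−N} N^{(N²−2N)/(N−1)} < 1. -/

import Mathlib

open MeasureTheory Filter
open scoped ENNReal

noncomputable section

/-- Euclidean space `ℝ^N`. -/
abbrev Euc (N : ℕ) : Type := EuclideanSpace ℝ (Fin N)

/-- The `L^p` norm on `ℝ^N` with real exponent `p`. -/
def pNorm (N : ℕ) (p : ℝ) (u : Euc N → ℝ) : ℝ :=
  (eLpNorm u (ENNReal.ofReal p) volume).toReal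

/-- The `L^N` norm of the gradient. -/
def gradNorm (N : ℕ) (u : Euc N → ℝ) : ℝ :=
  (eLpNorm (fun x => fderiv ℝ u x) (N : ℝ≥0∞) volume).toReal

/-- Membership in the Sobolev space `W^{1,N}(ℝ^N)`. -/
def MemW1N (N : ℕ) (u : Euc N → ℝ) : Prop :=
  MemLp u (N : ℝ≥0∞) volume ∧ Differentiable ℝ u ∧
    MemLp (fun x => fderiv ℝ u x) (N : ℝ≥0∞) volume

/-- `Φ_N(t) = e^t - Σ_{j=0}^{N-2} t^j/j!`. -/
def PhiN (N : ℕ) (t : ℝ) : ℝ :=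
  Real.exp t - ∑ j ∈ Finset.range (N - 1), t ^ j / (Nat.factorial j : ℝ)

/-- `Ψ_N(s) = Φ_N(s) - s^{N-1}/(N-1)!`. -/
def PsiN (N : ℕ) (s : ℝ) : ℝ :=
  PhiN N s - s ^ (N - 1) / (Nat.factorial (N - 1) : ℝ)

/-- `N' = N/(N-1)`. -/
def Nprime (N : ℕ) : ℝ := (N : ℝ) / ((N : ℝ) - 1)

/-- `ω_{N-1}`, the surface area of the unit sphere in `ℝ^N`
(equals `N` times the volume of the unit ball). -/
def sphereArea (N : ℕ) : ℝ :=
  N * (volume (Metric.ball (0 : Euc N) 1)).toReal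

/-- `α_N = N ω_{N-1}^{1/(N-1)}`. -/
def alphaN (N : ℕ) : ℝ := N * sphereArea N ^ ((1 : ℝ) / ((N : ℝ) - 1))

/-- The constraint set: `u ∈ W^{1,N}` with `‖∇u‖_N^a + ‖u‖_N^b = 1`. -/
def MTconstraint (N : ℕ) (a b : ℝ) (u : Euc N → ℝ) : Prop :=
  MemW1N N u ∧ gradNorm N u ^ a + pNorm N (N : ℝ) u ^ b = 1

/-- The Moser–Trudinger functional `∫_{ℝ^N} Φ_N(α |u|^{N'}) dx`. -/
def MTint (N : ℕ) (α : ℝ) (u : Euc N → ℝ) : ℝ :=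
  ∫ x, PhiN N (α * |u x| ^ Nprime N)

/-- `D_{N,α}(a,b)`, the Moser–Trudinger supremum under the inhomogeneous constraint. -/
def Dsup (N : ℕ) (α a b : ℝ) : ℝ :=
  sSup {c : ℝ | ∃ u : Euc N → ℝ, MTconstraint N a b u ∧ c = MTint N α u}

/-- `D_{N,α}(a,b)` is attained. -/
def Attains (N : ℕ) (α a b : ℝ) : Prop :=
  ∃ u : Euc N → ℝ, MTconstraint N a b u ∧ MTint N α u = Dsup N α a b

/-- `α_* = inf {α ∈ (0,α_N] : D_{N,α}(a,b) is attained}`, with value `∞`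
if `D_{N,α}(a,b)` is attained for no `α ∈ (0,α_N]`. -/
def alphaStar (N : ℕ) (a b : ℝ) : ℝ≥0∞ :=
  sInf {x : ℝ≥0∞ | ∃ α : ℝ, 0 < α ∧ α ≤ alphaN N ∧ Attains N α a b ∧ x = ENNReal.ofReal α}

/-- The best constant in the Gagliardo–Nirenberg inequality. -/
def BGN (N : ℕ) : ℝ :=
  sSup {c : ℝ | ∃ u : Euc N → ℝ, MemW1N N u ∧ ¬ u =ᵐ[volume] (0 : Euc N → ℝ) ∧
    c = pNorm N ((N : ℝ) * Nprime N) u ^ ((N : ℝ) * Nprime N) /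
        (pNorm N (N : ℝ) u ^ (N : ℝ) * gradNorm N u ^ ((N : ℝ) * Nprime N - (N : ℝ)))}

/-- `u` is radially symmetric. -/
def IsRadial (N : ℕ) (u : Euc N → ℝ) : Prop :=
  ∀ x y : Euc N, ‖x‖ = ‖y‖ → u x = u y

/-- Weak convergence in `L^N(ℝ^N)`: testing against functions in the dual `L^{N'}`. -/
def WeakLN (N : ℕ) (f : ℕ → Euc N → ℝ) (g : Euc N → ℝ) : Prop :=
  ∀ φ : Euc N → ℝ, MemLp φ (ENNReal.ofReal (Nprime N)) volume →
    Tendsto (fun n => ∫ x, f n x * φ x) atTop (nhds (∫ x, g x * φ x))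

/-- Weak convergence in `W^{1,N}(ℝ^N)`: weak `L^N` convergence of the functions and of
all directional derivatives. -/
def WeakW1N (N : ℕ) (u : ℕ → Euc N → ℝ) (u0 : Euc N → ℝ) : Prop :=
  WeakLN N u u0 ∧
    ∀ v : Euc N, WeakLN N (fun n x => fderiv ℝ (u n) x v) (fun x => fderiv ℝ u0 x v)

/-- A maximizing sequence for `D_{N,α}(a,b)`. -/
def MaximizingSeq (N : ℕ) (α a b : ℝ) (u : ℕ → Euc N → ℝ) : Prop :=
  (∀ n, MTconstraint N a b (u n)) ∧
    Tendsto (fun n => MTint N α (u n)) atTop (nhds (Dsup N α a b))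

section FactorialHelpers

open Real in
lemma fact_le_stirling (n : ℕ) (hn : 1 ≤ n) :
    (n.factorial : ℝ) ≤ Real.exp 1 * Real.sqrt n * ((n : ℝ) / Real.exp 1) ^ n := by
  obtain ⟨m, rfl⟩ := Nat.exists_eq_add_of_le hn
  have h1 : Stirling.stirlingSeq (1 + m) ≤ Stirling.stirlingSeq 1 := by
    have := Stirling.log_stirlingSeq'_antitone (Nat.zero_le m)
    simp only [Function.comp] at this
    have hpos := Stirling.stirlingSeq'_pos m
    have hpos1 := Stirling.stirlingSeq'_pos 0
    rw [Nat.succ_eq_add_one, Nat.add_comm] at *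
    exact (Real.log_le_log_iff (by simpa [Nat.add_comm] using hpos) (by simpa using hpos1)).mp
      (by simpa [Nat.succ_eq_add_one, Nat.add_comm] using this)
  have hden : (0:ℝ) < Real.sqrt (2 * (1+m)) * (((1+m : ℕ) : ℝ) / Real.exp 1) ^ (1+m) := by
    positivity
  have hdef : ((1+m).factorial : ℝ) =
      Stirling.stirlingSeq (1+m) * (Real.sqrt (2 * (1+m)) * (((1+m:ℕ) : ℝ) / Real.exp 1) ^ (1+m)) := by
    rw [Stirling.stirlingSeq]
    field_simp
    norm_num
  rw [hdef, Stirling.stirlingSeq_one] at *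
  calc Stirling.stirlingSeq (1+m) * (Real.sqrt (2 * (1+m)) * (((1+m:ℕ):ℝ) / Real.exp 1) ^ (1+m))
      ≤ (Real.exp 1 / Real.sqrt 2) * (Real.sqrt (2 * (1+m)) * (((1+m:ℕ):ℝ) / Real.exp 1) ^ (1+m)) := by
        apply mul_le_mul_of_nonneg_right _ hden.le
        simpa using h1
    _ = Real.exp 1 * Real.sqrt (1+m : ℕ) * (((1+m:ℕ):ℝ) / Real.exp 1) ^ (1+m) := by
        have : Real.sqrt (2 * (1+m)) = Real.sqrt 2 * Real.sqrt ((1+m:ℕ)) := by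
          push_cast
          rw [← Real.sqrt_mul (by norm_num)]
        rw [this]
        have h2 : Real.sqrt 2 ≠ 0 := by positivity
        field_simp

lemma key (n : ℕ) (hn : 2 ≤ n) :
    (n.factorial : ℝ) * ((n : ℝ) + 1) ^ (n ^ 2 - 1) < (n : ℝ) ^ (n ^ 2 + n) := by
  rcases lt_or_ge n 8 with h8 | h8
  · -- small cases: prove in ℕ
    have : n.factorial * (n+1) ^ (n ^ 2 - 1) < n ^ (n ^ 2 + n) := by
      interval_cases n <;> norm_num [Nat.factorial]
    calc (n.factorial : ℝ) * ((n:ℝ) + 1) ^ (n ^ 2 - 1)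
        = ((n.factorial * (n+1) ^ (n^2-1) : ℕ) : ℝ) := by push_cast; ring
      _ < ((n ^ (n^2+n) : ℕ) : ℝ) := by exact_mod_cast this
      _ = (n : ℝ) ^ (n^2+n) := by push_cast; ring
  · -- large cases via logs
    have hn0 : (0:ℝ) < n := by positivity
    have hn8 : (8:ℝ) ≤ n := by exact_mod_cast h8
    set L := Real.log n with hL
    have hL2 : 2 ≤ L := by
      have h82 : Real.log 8 ≤ L := Real.log_le_log (by norm_num) hn8
      have : Real.log 8 = 3 * Real.log 2 := by
        rw [show (8:ℝ) = 2 ^ 3 by norm_num, Real.log_pow]; push_cast; ring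
      nlinarith [Real.log_two_gt_d9]
    have hfact : Real.log n.factorial ≤ 1 + L / 2 + n * (L - 1) := by
      have := fact_le_stirling n (by omega)
      have hpos : (0:ℝ) < n.factorial := by exact_mod_cast n.factorial_pos
      calc Real.log n.factorial ≤ Real.log (Real.exp 1 * Real.sqrt n * ((n:ℝ)/Real.exp 1)^n) :=
            Real.log_le_log hpos this
        _ = 1 + L / 2 + n * (L - 1) := by
            rw [Real.log_mul (by positivity) (by positivity),
              Real.log_mul (by positivity) (by positivity), Real.log_exp,
              Real.log_pow, Real.log_div (by positivity) (by positivity), Real.log_exp,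
              Real.log_sqrt hn0.le]
    have hlog1 : Real.log ((n:ℝ) + 1) ≤ L + 1 / n := by
      have : Real.log ((n:ℝ)+1) - L = Real.log (((n:ℝ)+1)/n) := by
        rw [Real.log_div (by positivity) (by positivity)]
      have h2 : Real.log (((n:ℝ)+1)/n) ≤ ((n:ℝ)+1)/n - 1 :=
        Real.log_le_sub_one_of_pos (by positivity)
      have h3 : ((n:ℝ)+1)/n - 1 = 1 / n := by field_simp; ring
      linarith [this, h2, h3 ▸ h2]
    -- reduce to log inequality
    have hLHSpos : (0:ℝ) < (n.factorial : ℝ) * ((n:ℝ)+1) ^ (n^2-1) := by positivity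
    rw [← Real.exp_log hLHSpos, ← Real.exp_log (show (0:ℝ) < (n:ℝ)^(n^2+n) by positivity)]
    apply Real.exp_lt_exp.mpr
    rw [Real.log_mul (by positivity) (by positivity), Real.log_pow, Real.log_pow]
    have hcast1 : ((n^2 - 1 : ℕ) : ℝ) = (n:ℝ)^2 - 1 := by
      have : 1 ≤ n^2 := by nlinarith
      push_cast [this]; ring
    have hcast2 : ((n^2 + n : ℕ) : ℝ) = (n:ℝ)^2 + n := by push_cast; ring
    rw [hcast1, hcast2]
    have hsq : (1:ℝ) ≤ (n:ℝ)^2 := by nlinarith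
    have hmul : ((n:ℝ)^2 - 1) * Real.log ((n:ℝ)+1) ≤ ((n:ℝ)^2 - 1) * (L + 1/n) :=
      mul_le_mul_of_nonneg_left hlog1 (by nlinarith)
    have hexpand : ((n:ℝ)^2 - 1) * (L + 1/n) = ((n:ℝ)^2 - 1)*L + (n:ℝ) - 1/n := by
      field_simp; ring
    have h1n : (0:ℝ) < 1/n := by positivity
    linarith [hfact, hmul, hL2, h1n]

end FactorialHelpers

/-- Claim 3 of Appendix A: for every integer `N ≥ 3`,
`(N-1)! · N^{N²-2N} · (N-1)^{-(N²-N)} < 1`; equivalently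
`Γ(N)^{1/(N-1)} (N-1)^{-N} N^{(N²-2N)/(N-1)} < 1`. -/
theorem factorial_power_inequality (N : ℕ) (hN : 3 ≤ N) :
    (Nat.factorial (N - 1) : ℝ) * (N : ℝ) ^ (N ^ 2 - 2 * N) *
        ((N : ℝ) - 1) ^ (-((N : ℝ) ^ 2 - (N : ℝ))) < 1 ∧
    Real.Gamma N ^ ((1 : ℝ) / ((N : ℝ) - 1)) * ((N : ℝ) - 1) ^ (-(N : ℝ)) *
        (N : ℝ) ^ (((N : ℝ) ^ 2 - 2 * (N : ℝ)) / ((N : ℝ) - 1)) < 1 := by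
  obtain ⟨n, rfl⟩ : ∃ n, N = n + 1 := ⟨N - 1, by omega⟩
  have hn : 2 ≤ n := by omega
  have hn0 : (0:ℝ) < n := by positivity
  have hNsub : ((n:ℝ) + 1) - 1 = (n:ℝ) := by ring
  have hexp1 : (n + 1) ^ 2 - 2 * (n + 1) = n ^ 2 - 1 := by
    have h : (n+1)^2 = n^2 + 2*n + 1 := by ring
    omega
  have hfac : (n + 1) - 1 = n := by omega
  have hkey := key n hn
  have hpow_pos : (0:ℝ) < (n : ℝ) ^ (n ^ 2 + n) := by positivity
  have hF : (n.factorial : ℝ) * ((n:ℝ) + 1) ^ (n ^ 2 - 1) * ((n : ℝ) ^ (n ^ 2 + n))⁻¹ < 1 := by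
    rw [mul_inv_lt_iff₀ hpow_pos, one_mul]
    exact hkey
  have hrpow_eq : ((n:ℝ)) ^ (-(((n:ℝ) + 1) ^ 2 - ((n:ℝ) + 1))) = ((n : ℝ) ^ (n ^ 2 + n))⁻¹ := by
    have h1 : -(((n:ℝ) + 1) ^ 2 - ((n:ℝ) + 1)) = -(((n^2 + n : ℕ) : ℝ)) := by push_cast; ring
    rw [h1, Real.rpow_neg hn0.le, Real.rpow_natCast]
  constructor
  · push_cast [hfac, hexp1]
    rw [show ((n:ℝ) + 1 - 1) = (n:ℝ) by ring]
    calc (n.factorial : ℝ) * ((n:ℝ) + 1) ^ (n ^ 2 - 1) * (n:ℝ) ^ (-(((n:ℝ) + 1) ^ 2 - ((n:ℝ) + 1)))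
        = (n.factorial : ℝ) * ((n:ℝ) + 1) ^ (n ^ 2 - 1) * ((n : ℝ) ^ (n ^ 2 + n))⁻¹ := by
          rw [hrpow_eq]
      _ < 1 := hF
  · have hlt : ∀ x : ℝ, 0 < x → x ^ (n:ℝ) < 1 → x < 1 := by
      intro x hx h
      by_contra hge
      push_neg at hge
      exact absurd (Real.one_le_rpow hge (by positivity)) (by linarith)
    have hGamma : Real.Gamma ((n:ℝ) + 1) = (n.factorial : ℝ) := by
      exact_mod_cast Real.Gamma_nat_eq_factorial n
    have hfpos : (0:ℝ) < (n.factorial : ℝ) := by exact_mod_cast n.factorial_pos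
    have hN0 : (0:ℝ) < (n:ℝ) + 1 := by linarith
    push_cast
    rw [hNsub, hGamma]
    apply hlt _ (mul_pos (mul_pos (Real.rpow_pos_of_pos hfpos _)
      (Real.rpow_pos_of_pos hn0 _)) (Real.rpow_pos_of_pos hN0 _))
    rw [Real.mul_rpow (by positivity) (by positivity),
        Real.mul_rpow (by positivity) (by positivity),
        ← Real.rpow_mul hfpos.le, ← Real.rpow_mul hn0.le, ← Real.rpow_mul hN0.le]
    rw [show (1:ℝ)/(n:ℝ) * (n:ℝ) = 1 by field_simp, Real.rpow_one]
    rw [show (-((n:ℝ)+1)) * (n:ℝ) = -(((n:ℝ)+1)^2 - ((n:ℝ)+1)) by ring]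
    rw [show ((((n:ℝ)+1)^2 - 2*((n:ℝ)+1))/(n:ℝ)) * (n:ℝ) = ((n^2-1 : ℕ):ℝ) by
      push_cast [Nat.cast_sub (by nlinarith : 1 ≤ n^2)]; field_simp; ring]
    rw [Real.rpow_natCast, hrpow_eq]
    calc (n.factorial:ℝ) * ((n:ℝ)^(n^2+n))⁻¹ * ((n:ℝ)+1)^(n^2-1)
        = (n.factorial:ℝ) * ((n:ℝ)+1)^(n^2-1) * ((n:ℝ)^(n^2+n))⁻¹ := by ring
      _ < 1 := hF
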